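/- Let (X, t, r, d, ∂̃) be a dihedral module with ∞-simplicial faces and define d_1^k = Σ_{0 ≤ i_1 < ... < i_k ≤ n-1} (-1)^{i_1+...+i_k} ∂_(i_1,...,i_k) : X_{n,•} → X_{n-k,•+k-1}, T_n = (-1)^n t_n, R_n = (-1)^{n(n+1)/2} r_n. Then d_1^k ∘ (R_n T_n) = (R_{n-k} T_{n-k}) ∘ d_1^k for all k ≥ 1 and n ≥ 1. -/

import Mathlib

open scoped Classical

lemma myLM_sum_comp {K : Type*} [CommRing K] {A B C : Type*}
    [AddCommGroup A] [AddCommGroup B] [AddCommGroup C]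
    [Module K A] [Module K B] [Module K C]
    {ι : Type*} (s : Finset ι) (f : ι → (B →ₗ[K] C)) (g : A →ₗ[K] B) :
    (∑ i ∈ s, f i).comp g = ∑ i ∈ s, (f i).comp g := by
  ext x; simp [LinearMap.sum_apply]

lemma myLM_comp_sum {K : Type*} [CommRing K] {A B C : Type*}
    [AddCommGroup A] [AddCommGroup B] [AddCommGroup C]
    [Module K A] [Module K B] [Module K C]
    {ι : Type*} (s : Finset ι) (g : B →ₗ[K] C) (f : ι → (A →ₗ[K] B)) :
    g.comp (∑ i ∈ s, f i) = ∑ i ∈ s, g.comp (f i) := by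
  ext x; simp [LinearMap.sum_apply, map_sum]

lemma my_negpow {K : Type*} [CommRing K] (a b : ℕ) (h : a % 2 = b % 2) :
    (-1 : K) ^ a = (-1 : K) ^ b := by
  conv_lhs => rw [← Nat.div_add_mod a 2]
  conv_rhs => rw [← Nat.div_add_mod b 2]
  rw [pow_add, pow_add, pow_mul, pow_mul, h]
  norm_num

lemma my_key (n k : ℕ) (hk : 1 ≤ k) (hkn : k ≤ n) :
    k * (n - 1) + k * (k - 1) / 2 + n * (n + 1) / 2 + n
      = (n - k) * ((n - k) + 1) / 2 + (n - k) + 2 * (k * n) := by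
  obtain ⟨k', rfl⟩ : ∃ k', k = k' + 1 := ⟨k - 1, by omega⟩
  obtain ⟨m, rfl⟩ : ∃ m, n = m + (k' + 1) := ⟨n - (k' + 1), by omega⟩
  have H : ∀ x : ℕ, 2 * (x * (x + 1) / 2) = x * (x + 1) := fun x =>
    Nat.mul_div_cancel' (Nat.even_mul_succ_self x).two_dvd
  have e1 : (k' + 1) - 1 = k' := rfl
  have e2 : m + (k' + 1) - 1 = m + k' := by omega
  have e3 : m + (k' + 1) - (k' + 1) = m := by omega
  have e4 : (k' + 1) * ((k' + 1) - 1) / 2 = k' * (k' + 1) / 2 := by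
    rw [e1, mul_comm]
  rw [e2, e3, e4]
  have hA := H k'
  have hB := H (m + (k' + 1))
  have hC := H m
  set A := k' * (k' + 1) / 2 with hAd
  set B := (m + (k' + 1)) * ((m + (k' + 1)) + 1) / 2 with hBd
  set C := m * (m + 1) / 2 with hCd
  apply Nat.eq_of_mul_eq_mul_left (show 0 < 2 by norm_num)
  zify at hA hB hC ⊢
  linear_combination hA + hB - hC

/-- In a dihedral module with ∞-simplicial faces, with
`d₁^k = ∑_{0≤i₁<⋯<i_k≤n-1} (-1)^{i₁+⋯+i_k} ∂_(i₁,…,i_k) : X_{n,•} → X_{n-k,•+k-1}`,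
`T_n = (-1)^n t_n` and `R_n = (-1)^{n(n+1)/2} r_n`, one has
`d₁^k ∘ (R_n T_n) = (R_{n-k} T_{n-k}) ∘ d₁^k` (`k ≥ 1`, `n ≥ 1`).
Here `F n k c` stands for the face `∂_(c 0, …, c (k-1))`, internal grading collapsed. -/
theorem stmt9 {K : Type*} [CommRing K] {X : ℕ → Type*}
    [∀ n, AddCommGroup (X n)] [∀ n, Module K (X n)]
    (t r : ∀ n, Module.End K (X n))
    (ht : ∀ n, t n ^ (n + 1) = 1) (hr2 : ∀ n, r n ^ 2 = 1)
    (hrt : ∀ n, r n * t n = t n ^ n * r n)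
    (F : ∀ n k : ℕ, (Fin k → Fin (n + 1)) → (X n →ₗ[K] X (n - k)))
    (n k : ℕ) (hk : 1 ≤ k) (hkn : k ≤ n) (hn : 1 ≤ n)
    -- relation (1.2), case `i₁ > 0` : `∂_(i₁,…,i_k) t_n = t_{n-k} ∂_(i₁-1,…,i_k-1)`
    (htpos : ∀ c : Fin k → Fin (n + 1), StrictMono c → 0 < (c ⟨0, hk⟩ : ℕ) →
      (F n k c).comp (t n : X n →ₗ[K] X n) =
        (t (n - k) : X (n - k) →ₗ[K] X (n - k)).comp
          (F n k (fun s => ⟨(c s : ℕ) - 1, by have := (c s).isLt; omega⟩)))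
    -- relation (1.2), case `i₁ = 0` : `∂_(0,i₂,…,i_k) t_n = (-1)^{k-1} ∂_(i₂-1,…,i_k-1,n)`
    (htzero : ∀ c : Fin k → Fin (n + 1), StrictMono c → (c ⟨0, hk⟩ : ℕ) = 0 →
      (F n k c).comp (t n : X n →ₗ[K] X n) =
        ((-1 : K) ^ (k - 1)) •
          F n k (fun s => if h : (s : ℕ) + 1 < k then
              ⟨(c ⟨(s : ℕ) + 1, h⟩ : ℕ) - 1, by have := (c ⟨(s : ℕ) + 1, h⟩).isLt; omega⟩
            else ⟨n, by omega⟩))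
    -- relation (1.3) : `∂_(i₁,…,i_k) r_n = (-1)^{k(k-1)/2} r_{n-k} ∂_(n-i_k,…,n-i₁)`
    (hrel : ∀ c : Fin k → Fin (n + 1), StrictMono c →
      (F n k c).comp (r n : X n →ₗ[K] X n) =
        ((-1 : K) ^ (k * (k - 1) / 2)) •
          ((r (n - k) : X (n - k) →ₗ[K] X (n - k)).comp
            (F n k (fun s => ⟨n - (c s.rev : ℕ), by omega⟩)))) :
    (∑ c ∈ Finset.univ.filter
        (fun c : Fin k → Fin (n + 1) => StrictMono c ∧ ∀ s, (c s : ℕ) < n),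
        ((-1 : K) ^ (∑ s : Fin k, (c s : ℕ))) • F n k c).comp
      (((((-1 : K) ^ (n * (n + 1) / 2)) • r n) * (((-1 : K) ^ n) • t n) :
          Module.End K (X n)) : X n →ₗ[K] X n) =
    (((((-1 : K) ^ ((n - k) * ((n - k) + 1) / 2)) • r (n - k)) *
          (((-1 : K) ^ (n - k)) • t (n - k)) :
          Module.End K (X (n - k))) : X (n - k) →ₗ[K] X (n - k)).comp
      (∑ c ∈ Finset.univ.filter
        (fun c : Fin k → Fin (n + 1) => StrictMono c ∧ ∀ s, (c s : ℕ) < n),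
        ((-1 : K) ^ (∑ s : Fin k, (c s : ℕ))) • F n k c) := by
  classical
  set S := Finset.univ.filter
      (fun c : Fin k → Fin (n + 1) => StrictMono c ∧ ∀ s, (c s : ℕ) < n) with hSdef
  set σ : (Fin k → Fin (n + 1)) → (Fin k → Fin (n + 1)) :=
    fun c s => ⟨n - 1 - (c s.rev : ℕ), by omega⟩ with hσdef
  set G : (Fin k → Fin (n + 1)) → (X n →ₗ[K] X (n - k)) := fun c =>
    (r (n - k) : X (n - k) →ₗ[K] X (n - k)).comp
      ((t (n - k) : X (n - k) →ₗ[K] X (n - k)).comp (F n k c)) with hGdef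
  -- membership of σ c
  have hmem : ∀ c ∈ S, σ c ∈ S := by
    intro c hc
    rw [hSdef, Finset.mem_filter] at hc ⊢
    obtain ⟨-, hmono, hlt⟩ := hc
    refine ⟨Finset.mem_univ _, ?_, fun s => by simp only [hσdef]; omega⟩
    intro a b hab
    have h1 : b.rev < a.rev := by rwa [Fin.rev_lt_rev]
    have h2 : (c b.rev : ℕ) < (c a.rev : ℕ) := hmono h1
    have h3 := hlt a.rev
    exact Fin.mk_lt_mk.mpr (by omega)
  -- involution
  have hinv : ∀ c ∈ S, σ (σ c) = c := by
    intro c hc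
    rw [hSdef, Finset.mem_filter] at hc
    funext s
    ext
    simp only [hσdef, Fin.rev_rev]
    have := hc.2.2 s
    omega
  -- sum of σ c
  have hsum : ∀ c : Fin k → Fin (n + 1), (∀ s, (c s : ℕ) < n) →
      (∑ s : Fin k, ((σ c) s : ℕ)) = k * (n - 1) - ∑ s : Fin k, (c s : ℕ) := by
    intro c hlt
    have h1 : (∑ s : Fin k, ((σ c) s : ℕ)) = ∑ s : Fin k, (n - 1 - (c s : ℕ)) := by
      refine Fintype.sum_equiv Fin.revPerm _ _ (fun s => ?_)
      simp [hσdef]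
    have h2 : (∑ s : Fin k, (n - 1 - (c s : ℕ))) + ∑ s : Fin k, (c s : ℕ) = k * (n - 1) := by
      rw [← Finset.sum_add_distrib]
      have e : ∀ s : Fin k, (n - 1 - (c s : ℕ)) + (c s : ℕ) = n - 1 := fun s => by
        have := hlt s; omega
      simp only [e, Finset.sum_const, Finset.card_univ, Fintype.card_fin, smul_eq_mul]
    omega
  have hsle : ∀ c : Fin k → Fin (n + 1), (∀ s, (c s : ℕ) < n) →
      (∑ s : Fin k, (c s : ℕ)) ≤ k * (n - 1) := by
    intro c hlt
    calc (∑ s : Fin k, (c s : ℕ)) ≤ ∑ _s : Fin k, (n - 1) :=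
          Finset.sum_le_sum (fun s _ => by have := hlt s; omega)
      _ = k * (n - 1) := by
          simp [Finset.sum_const, Finset.card_univ, Fintype.card_fin]
  -- the key computation ∂_c ∘ (r t) = ε • r' t' ∂_{σ c}
  have key : ∀ c : Fin k → Fin (n + 1), StrictMono c → (∀ s, (c s : ℕ) < n) →
      (F n k c).comp ((r n : X n →ₗ[K] X n).comp (t n : X n →ₗ[K] X n))
        = ((-1 : K) ^ (k * (k - 1) / 2)) • G (σ c) := by
    intro c hmono hlt
    have mono₁ : StrictMono (fun s : Fin k =>
        (⟨n - (c s.rev : ℕ), by omega⟩ : Fin (n + 1))) := by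
      intro a b hab
      have h1 : b.rev < a.rev := by rwa [Fin.rev_lt_rev]
      have h2 : (c b.rev : ℕ) < (c a.rev : ℕ) := hmono h1
      have h3 := hlt a.rev
      exact Fin.mk_lt_mk.mpr (by omega)
    have pos₁ : 0 < (((fun s : Fin k =>
        (⟨n - (c s.rev : ℕ), by omega⟩ : Fin (n + 1))) ⟨0, hk⟩ : Fin (n + 1)) : ℕ) := by
      have := hlt (Fin.rev ⟨0, hk⟩)
      simp only
      omega
    rw [← LinearMap.comp_assoc, hrel c hmono, LinearMap.smul_comp, LinearMap.comp_assoc,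
      htpos _ mono₁ pos₁]
    rw [hGdef]
    congr 4
    funext s
    ext
    simp only [hσdef]
    omega
  -- rewrite the products of endomorphisms
  have hM : ((((-1 : K) ^ (n * (n + 1) / 2)) • r n) * (((-1 : K) ^ n) • t n) :
      Module.End K (X n))
      = (((-1 : K) ^ (n * (n + 1) / 2)) * ((-1 : K) ^ n)) •
          ((r n : X n →ₗ[K] X n).comp (t n : X n →ₗ[K] X n)) := by
    rw [smul_mul_assoc, mul_smul_comm, smul_smul, Module.End.mul_eq_comp]
  have hM' : ((((-1 : K) ^ ((n - k) * ((n - k) + 1) / 2)) • r (n - k)) *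
        (((-1 : K) ^ (n - k)) • t (n - k)) : Module.End K (X (n - k)))
      = (((-1 : K) ^ ((n - k) * ((n - k) + 1) / 2)) * ((-1 : K) ^ (n - k))) •
          ((r (n - k) : X (n - k) →ₗ[K] X (n - k)).comp
            (t (n - k) : X (n - k) →ₗ[K] X (n - k))) := by
    rw [smul_mul_assoc, mul_smul_comm, smul_smul, Module.End.mul_eq_comp]
  rw [hM, hM', LinearMap.comp_smul, LinearMap.smul_comp, myLM_sum_comp, myLM_comp_sum,
    Finset.smul_sum, Finset.smul_sum]
  refine Finset.sum_nbij' σ σ hmem hmem hinv hinv ?_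
  intro c hc
  rw [hSdef, Finset.mem_filter] at hc
  obtain ⟨-, hmono, hlt⟩ := hc
  rw [LinearMap.smul_comp, key c hmono hlt, LinearMap.comp_smul]
  have hGc : (((r (n - k) : X (n - k) →ₗ[K] X (n - k)).comp
      (t (n - k) : X (n - k) →ₗ[K] X (n - k))).comp (F n k (σ c))) = G (σ c) := by
    rw [hGdef, LinearMap.comp_assoc]
  rw [hGc]
  simp only [smul_smul]
  congr 1
  rw [hsum c hlt]
  simp only [← pow_add]
  apply my_negpow
  have hkey := my_key n k hk hkn
  have hle := hsle c hlt
  set P := n * (n + 1) / 2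
  set Q := (n - k) * ((n - k) + 1) / 2
  set R := k * (k - 1) / 2
  set D := k * (n - 1)
  set E := k * n
  set Sc := ∑ s : Fin k, (c s : ℕ)
  omega
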